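/- Let t ≥ k > 0 be integers and let b_1 ≥ b_2 ≥ ... ≥ b_t > 0 be reals such that b_{t-k+1} + ... + b_t ≥ α for some α > 0. Then for any real x, any n ≥ t, and any further reals b_{t+1}, ..., b_n, the Rademacher sum Σ_{i=1}^n b_i ε_i satisfies P(Σ_{i=1}^n b_i ε_i ∈ (x - α, x + α)) ≤ f(k,t)/2^t, where f(k,t) denotes the sum of the k largest binomial coefficients of the form C(t,i), 0 ≤ i ≤ t. -/

import Mathlib

/-- The probability that a finite Rademacher sum with weights `a` (signs chosen
independently and uniformly from `{-1,+1}`) satisfies the predicate `p`. -/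
noncomputable def radProb {ι : Type*} [Fintype ι] (a : ι → ℝ) (p : ℝ → Prop) : ℝ :=
  (Nat.card {ε : ι → Bool | p (∑ i, a i * (if ε i then (1 : ℝ) else -1))}) /
    2 ^ (Fintype.card ι)

/-- `sumKLargestBinom k t` is the sum of the `k` largest binomial coefficients
of the form `C(t, i)`, `0 ≤ i ≤ t`, i.e. the maximum over `k`-element subsets
of `{0, ..., t}` of the sum of the corresponding binomial coefficients. -/
def sumKLargestBinom (k t : ℕ) : ℕ :=
  (Finset.powersetCard k (Finset.range (t + 1))).sup (fun S => ∑ i ∈ S, Nat.choose t i)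

section Aux

open Finset

lemma sum_smallest (b : ℕ → ℝ) (t : ℕ)
    (hmono : ∀ i j : ℕ, 1 ≤ i → i ≤ j → j ≤ t → b j ≤ b i) :
    ∀ k s T, s ≤ t → T ⊆ Finset.Icc 1 s → T.card = k →
      ∑ i ∈ Finset.Icc (s - k + 1) s, b i ≤ ∑ i ∈ T, b i := by
  intro k
  induction k with
  | zero =>
    intro s T hst hT hcard
    rw [Finset.card_eq_zero] at hcard
    subst hcard
    have : s - 0 + 1 = s + 1 := by omega
    simp [this]
  | succ k ih =>
    intro s T hst hT hcard
    have hne : T.Nonempty := Finset.card_pos.mp (by omega)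
    set M := T.max' hne with hM
    have hMT : M ∈ T := T.max'_mem hne
    have hM1 : 1 ≤ M := (Finset.mem_Icc.mp (hT hMT)).1
    have hMs : M ≤ s := (Finset.mem_Icc.mp (hT hMT)).2
    have hTM : T ⊆ Finset.Icc 1 M := by
      intro i hi
      exact Finset.mem_Icc.mpr ⟨(Finset.mem_Icc.mp (hT hi)).1, T.le_max' i hi⟩
    have hMk : k + 1 ≤ M := by
      have := Finset.card_le_card hTM
      rw [hcard, Nat.card_Icc] at this; omega
    have hsk : k + 1 ≤ s := le_trans hMk hMs
    set T' := T.erase M with hT'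
    have hT'sub : T' ⊆ Finset.Icc 1 (M - 1) := by
      intro i hi
      have hiT : i ∈ T := Finset.mem_of_mem_erase hi
      have : i ≠ M := Finset.ne_of_mem_erase hi
      have := Finset.mem_Icc.mp (hT hiT)
      have := T.le_max' i hiT
      exact Finset.mem_Icc.mpr ⟨by omega, by omega⟩
    have hT'card : T'.card = k := by
      rw [hT', Finset.card_erase_of_mem hMT, hcard]
      omega
    have IH := ih (M - 1) T' (by omega) hT'sub hT'card
    -- goal : ∑ i in Icc (s - (k+1) + 1) s, b i ≤ ∑ i in T, b i
    have hsplitT : ∑ i ∈ T, b i = ∑ i ∈ T', b i + b M := by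
      rw [hT', Finset.sum_erase_add T _ hMT]
    have hsplitI : ∑ i ∈ Finset.Icc (s - (k+1) + 1) s, b i
        = ∑ i ∈ Finset.Icc (s - k) (s - 1), b i + b s := by
      have h1 : s - (k+1) + 1 = s - k := by omega
      rw [h1]
      have h2 : Finset.Icc (s - k) s = insert s (Finset.Icc (s - k) (s - 1)) := by
        ext i
        simp only [Finset.mem_Icc, Finset.mem_insert]
        omega
      rw [h2, Finset.sum_insert (by simp [Finset.mem_Icc]; omega)]
      ring
    have hcompare : ∑ i ∈ Finset.Icc (s - k) (s - 1), b i
        ≤ ∑ i ∈ Finset.Icc (M - 1 - k + 1) (M - 1), b i := by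
      have e1 : ∑ i ∈ Finset.Icc (s - k) (s - 1), b i
          = ∑ i ∈ Finset.range k, b (s - k + i) := by
        rw [← Finset.Ico_add_one_right_eq_Icc, Finset.sum_Ico_eq_sum_range]
        have h3 : s - 1 + 1 - (s - k) = k := by omega
        rw [h3]
      have e2 : ∑ i ∈ Finset.Icc (M - 1 - k + 1) (M - 1), b i
          = ∑ i ∈ Finset.range k, b (M - k + i) := by
        rw [← Finset.Ico_add_one_right_eq_Icc, Finset.sum_Ico_eq_sum_range]
        have h3 : M - 1 + 1 - (M - 1 - k + 1) = k := by omega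
        rw [h3]
        apply Finset.sum_congr rfl
        intro i hi
        congr 1
        omega
      rw [e1, e2]
      apply Finset.sum_le_sum
      intro i hi
      have hik := Finset.mem_range.mp hi
      exact hmono (M - k + i) (s - k + i) (by omega) (by omega) (by omega)
    have hbs : b s ≤ b M := hmono M s hM1 hMs hst
    calc ∑ i ∈ Finset.Icc (s - (k+1) + 1) s, b i
        = ∑ i ∈ Finset.Icc (s - k) (s - 1), b i + b s := hsplitI
      _ ≤ ∑ i ∈ Finset.Icc (M - 1 - k + 1) (M - 1), b i + b M := add_le_add hcompare hbs
      _ ≤ ∑ i ∈ T', b i + b M := by gcongr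
      _ = ∑ i ∈ T, b i := hsplitT.symm


lemma klym {α : Type*} [Fintype α] [DecidableEq α] :
    ∀ (k : ℕ) (𝒜 : Finset (Finset α)),
    (∀ A ∈ 𝒜, ∀ B ∈ 𝒜, A ⊆ B → B.card < A.card + k) →
    ∑ r ∈ range (Fintype.card α + 1), (#(𝒜 # r) : ℚ) / (Fintype.card α).choose r ≤ k := by
  intro k
  induction k with
  | zero =>
    intro 𝒜 h
    have : 𝒜 = ∅ := by
      by_contra hne
      obtain ⟨A, hA⟩ := Finset.nonempty_iff_ne_empty.mpr hne
      have := h A hA A hA (subset_refl A)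
      omega
    subst this
    simp [Finset.slice]
  | succ k ih =>
    intro 𝒜 h
    classical
    set M := 𝒜.filter (fun A => ∀ B ∈ 𝒜, A ⊆ B → A = B) with hM
    have hMsub : M ⊆ 𝒜 := Finset.filter_subset _ _
    have hanti : IsAntichain (· ⊆ ·) (M : Set (Finset α)) := by
      intro A hA B hB hne hAB
      simp only [hM, Finset.coe_filter, Set.mem_setOf_eq] at hA hB
      exact hne (hA.2 B hB.1 hAB)
    have hlym := Finset.sum_card_slice_div_choose_le_one (𝕜 := ℚ) hanti
    have hrest : ∀ A ∈ 𝒜 \ M, ∀ B ∈ 𝒜 \ M, A ⊆ B → B.card < A.card + k := by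
      intro A hA B hB hAB
      rw [Finset.mem_sdiff] at hA hB
      have hBnm : ¬(∀ C ∈ 𝒜, B ⊆ C → B = C) := by
        intro hcon
        exact hB.2 (Finset.mem_filter.mpr ⟨hB.1, hcon⟩)
      push_neg at hBnm
      obtain ⟨C, hC, hBC, hBne⟩ := hBnm
      have hlt : B.card < C.card := Finset.card_lt_card (Finset.ssubset_iff_subset_ne.mpr ⟨hBC, hBne⟩)
      have := h A hA.1 C hC (hAB.trans hBC)
      omega
    have ihr := ih (𝒜 \ M) hrest
    have hsplit : ∀ r, (𝒜 # r) = ((𝒜 \ M) # r) ∪ (M # r) := by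
      intro r
      ext A
      simp only [Finset.mem_slice, Finset.mem_union, Finset.mem_sdiff]
      constructor
      · rintro ⟨hA, hr⟩
        by_cases hAM : A ∈ M
        · exact Or.inr ⟨hAM, hr⟩
        · exact Or.inl ⟨⟨hA, hAM⟩, hr⟩
      · rintro (⟨⟨hA, _⟩, hr⟩ | ⟨hAM, hr⟩)
        · exact ⟨hA, hr⟩
        · exact ⟨hMsub hAM, hr⟩
    have hdisj : ∀ r, Disjoint ((𝒜 \ M) # r) (M # r) := by
      intro r
      apply Finset.disjoint_left.mpr
      intro A hA hA'
      rw [Finset.mem_slice, Finset.mem_sdiff] at hA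
      exact hA.1.2 (Finset.mem_slice.mp hA').1
    have hcardsplit : ∀ r, (#(𝒜 # r) : ℚ) = #((𝒜 \ M) # r) + #(M # r) := by
      intro r
      rw [hsplit r, Finset.card_union_of_disjoint (hdisj r)]
      push_cast
      ring
    calc ∑ r ∈ range (Fintype.card α + 1), (#(𝒜 # r) : ℚ) / (Fintype.card α).choose r
        = ∑ r ∈ range (Fintype.card α + 1), ((#((𝒜 \ M) # r) : ℚ) / (Fintype.card α).choose r
            + (#(M # r) : ℚ) / (Fintype.card α).choose r) := by
          apply Finset.sum_congr rfl
          intro r _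
          rw [hcardsplit r, add_div]
      _ = (∑ r ∈ range (Fintype.card α + 1), (#((𝒜 \ M) # r) : ℚ) / (Fintype.card α).choose r)
            + ∑ r ∈ range (Fintype.card α + 1), (#(M # r) : ℚ) / (Fintype.card α).choose r :=
          Finset.sum_add_distrib
      _ ≤ k + 1 := by
          push_cast
          exact add_le_add ihr hlym
      _ = (k + 1 : ℕ) := by push_cast; ring


lemma knapsack (k t : ℕ) (hkt : k ≤ t + 1) (m : ℕ → ℕ)
    (hm : ∀ j ∈ range (t + 1), m j ≤ t.choose j)
    (hsum : ∑ j ∈ range (t + 1), (m j : ℚ) / t.choose j ≤ k) :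
    ∑ j ∈ range (t + 1), m j ≤ sumKLargestBinom k t := by
  classical
  -- obtain a maximizing S
  have hne : (Finset.powersetCard k (Finset.range (t + 1))).Nonempty := by
    rw [Finset.powersetCard_nonempty]
    simpa using hkt
  obtain ⟨S, hS, hSmax⟩ := Finset.exists_mem_eq_sup _ hne (fun S => ∑ i ∈ S, Nat.choose t i)
  rw [Finset.mem_powersetCard] at hS
  obtain ⟨hSsub, hScard⟩ := hS
  -- choose j0 in S minimizing choose t j
  rcases Nat.eq_zero_or_pos k with hk0 | hkpos
  · subst hk0
    have hnn : ∀ i ∈ range (t + 1), (0:ℚ) ≤ (m i : ℚ) / t.choose i := by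
      intro i _
      positivity
    have hzero : ∑ j ∈ range (t + 1), (m j : ℚ) / t.choose j = 0 := by
      have := Finset.sum_nonneg hnn
      simp only [Nat.cast_zero] at hsum
      linarith
    have hz : ∀ j ∈ range (t + 1), m j = 0 := by
      intro j hj
      have h0 := (Finset.sum_eq_zero_iff_of_nonneg hnn).mp hzero j hj
      have hch : (0:ℚ) < t.choose j := by
        exact_mod_cast Nat.choose_pos (Nat.lt_succ_iff.mp (mem_range.mp hj))
      have : (m j : ℚ) = 0 := by
        field_simp at h0
        exact_mod_cast h0
      exact_mod_cast this
    rw [Finset.sum_eq_zero hz]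
    exact Nat.zero_le _
  have hSne : S.Nonempty := Finset.card_pos.mp (by omega)
  obtain ⟨j0, hj0S, hj0min⟩ := Finset.exists_min_image S (fun j => Nat.choose t j) hSne
  -- outside elements are dominated
  have hout : ∀ j ∈ range (t + 1), j ∉ S → t.choose j ≤ t.choose j0 := by
    intro j hj hjS
    by_contra hgt
    push_neg at hgt
    set S' := insert j (S.erase j0) with hS'
    have hS'card : S'.card = k := by
      rw [hS', Finset.card_insert_of_notMem (fun hc => hjS (Finset.mem_of_mem_erase hc)),
        Finset.card_erase_of_mem hj0S, hScard]
      omega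
    have hS'sub : S' ⊆ range (t + 1) := by
      intro i hi
      rcases Finset.mem_insert.mp hi with rfl | hi'
      · exact hj
      · exact hSsub (Finset.mem_of_mem_erase hi')
    have hS'mem : S' ∈ Finset.powersetCard k (Finset.range (t + 1)) :=
      Finset.mem_powersetCard.mpr ⟨hS'sub, hS'card⟩
    have hle : ∑ i ∈ S', t.choose i ≤ ∑ i ∈ S, t.choose i := by
      rw [← hSmax]
      exact Finset.le_sup (f := fun S => ∑ i ∈ S, Nat.choose t i) hS'mem
    have hsum' : ∑ i ∈ S', t.choose i = t.choose j + (∑ i ∈ S, t.choose i - t.choose j0) := by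
      rw [hS', Finset.sum_insert (fun hc => hjS (Finset.mem_of_mem_erase hc))]
      congr 1
      rw [← Finset.sum_erase_add S _ hj0S]
      omega
    have hj0le : t.choose j0 ≤ ∑ i ∈ S, t.choose i :=
      Finset.single_le_sum (fun i _ => Nat.zero_le _) hj0S
    omega
  -- now the rational computation
  set c : ℕ → ℚ := fun j => (t.choose j : ℚ) with hc
  have hcpos : ∀ j ∈ range (t + 1), 0 < c j := by
    intro j hj
    have := Nat.choose_pos (Nat.lt_succ_iff.mp (mem_range.mp hj))
    simp only [hc]
    exact_mod_cast this
  have hj0pos : 0 < c j0 := hcpos j0 (hSsub hj0S)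
  have key : ∑ j ∈ range (t + 1) \ S, (m j : ℚ) ≤ ∑ j ∈ S, (c j - m j) := by
    have h1 : ∑ j ∈ range (t + 1) \ S, (m j : ℚ) / c j0 ≤ ∑ j ∈ range (t + 1) \ S, (m j : ℚ) / c j := by
      apply Finset.sum_le_sum
      intro j hj
      rw [Finset.mem_sdiff] at hj
      apply div_le_div_of_nonneg_left (by positivity) (hcpos j hj.1)
      simp only [hc]
      exact_mod_cast hout j hj.1 hj.2
    have h2 : ∑ j ∈ S, (m j : ℚ) / c j + ∑ j ∈ range (t + 1) \ S, (m j : ℚ) / c j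
        = ∑ j ∈ range (t + 1), (m j : ℚ) / c j := by
      rw [add_comm, Finset.sum_sdiff_eq_sub hSsub]
      ring
    have h3 : ∑ j ∈ range (t + 1) \ S, (m j : ℚ) / c j0 ≤ k - ∑ j ∈ S, (m j : ℚ) / c j := by
      linarith [hsum, h1, h2]
    have h4 : ∑ j ∈ range (t + 1) \ S, (m j : ℚ) ≤ c j0 * (k - ∑ j ∈ S, (m j : ℚ) / c j) := by
      rw [← Finset.sum_div] at h3
      calc ∑ j ∈ range (t + 1) \ S, (m j : ℚ)
          = (∑ j ∈ range (t + 1) \ S, (m j : ℚ)) / c j0 * c j0 := by field_simp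
        _ ≤ (k - ∑ j ∈ S, (m j : ℚ) / c j) * c j0 := by
            apply mul_le_mul_of_nonneg_right h3 (le_of_lt hj0pos)
        _ = c j0 * (k - ∑ j ∈ S, (m j : ℚ) / c j) := mul_comm _ _
    have h5 : c j0 * (k - ∑ j ∈ S, (m j : ℚ) / c j) = ∑ j ∈ S, c j0 * (1 - (m j : ℚ) / c j) := by
      rw [← Finset.mul_sum]
      congr 1
      rw [Finset.sum_sub_distrib, Finset.sum_const, hScard, nsmul_eq_mul, mul_one]
    have h6 : ∑ j ∈ S, c j0 * (1 - (m j : ℚ) / c j) ≤ ∑ j ∈ S, (c j - m j) := by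
      apply Finset.sum_le_sum
      intro j hj
      have hjr := hSsub hj
      have hcj := hcpos j hjr
      have hmj : (m j : ℚ) ≤ c j := by simp only [hc]; exact_mod_cast hm j hjr
      have h1mj : 0 ≤ 1 - (m j : ℚ) / c j := by
        rw [sub_nonneg, div_le_one hcj]
        exact hmj
      have hj0cj : c j0 ≤ c j := by simp only [hc]; exact_mod_cast hj0min j hj
      calc c j0 * (1 - (m j : ℚ) / c j) ≤ c j * (1 - (m j : ℚ) / c j) :=
            mul_le_mul_of_nonneg_right hj0cj h1mj
        _ = c j - m j := by field_simp
    linarith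
  have final : (∑ j ∈ range (t + 1), (m j : ℚ)) ≤ ∑ j ∈ S, c j := by
    rw [← Finset.sum_sdiff hSsub]
    have : ∑ j ∈ S, (m j : ℚ) + ∑ j ∈ S, (c j - m j) = ∑ j ∈ S, c j := by
      rw [← Finset.sum_add_distrib]
      apply Finset.sum_congr rfl
      intro j _
      ring
    linarith
  have : (∑ j ∈ range (t + 1), m j : ℚ) ≤ (∑ j ∈ S, t.choose j : ℚ) := by
    push_cast
    simp only [hc] at final
    push_cast at final
    exact final
  have hnat : ∑ j ∈ range (t + 1), m j ≤ ∑ j ∈ S, t.choose j := by exact_mod_cast this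
  calc ∑ j ∈ range (t + 1), m j ≤ ∑ j ∈ S, t.choose j := hnat
    _ ≤ sumKLargestBinom k t := Finset.le_sup (f := fun S => ∑ i ∈ S, Nat.choose t i) (Finset.mem_powersetCard.mpr ⟨hSsub, hScard⟩)


lemma ksperner (k t : ℕ) (hkt : k ≤ t) (𝒜 : Finset (Finset (Fin t)))
    (h : ∀ A ∈ 𝒜, ∀ B ∈ 𝒜, A ⊆ B → B.card < A.card + k) :
    𝒜.card ≤ sumKLargestBinom k t := by
  classical
  have hcardfin : Fintype.card (Fin t) = t := Fintype.card_fin t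
  set m : ℕ → ℕ := fun r => #(𝒜 # r) with hm
  have hAcard : 𝒜.card = ∑ r ∈ range (t + 1), m r := by
    rw [Finset.card_eq_sum_card_fiberwise (f := Finset.card) (t := range (t + 1))]
    · apply Finset.sum_congr rfl
      intro r _
      congr 1
    · intro A hA
      rw [Finset.mem_coe, Finset.mem_range, Nat.lt_succ_iff]
      calc A.card ≤ Fintype.card (Fin t) := A.card_le_univ.trans_eq (by simp)
        _ = t := hcardfin
  have hmle : ∀ j ∈ range (t + 1), m j ≤ t.choose j := by
    intro j hj
    have : 𝒜 # j ⊆ Finset.powersetCard j (univ : Finset (Fin t)) := by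
      intro A hA
      rw [Finset.mem_powersetCard]
      exact ⟨Finset.subset_univ A, (Finset.mem_slice.mp hA).2⟩
    calc m j ≤ (Finset.powersetCard j (univ : Finset (Fin t))).card := Finset.card_le_card this
      _ = t.choose j := by rw [Finset.card_powersetCard, Finset.card_univ, hcardfin]
  have hlym := klym k 𝒜 h
  rw [hcardfin] at hlym
  have := knapsack k t (by omega) m hmle hlym
  omega


open Classical in
/-- The fixed-tail fiber bound. -/
lemma fiber_bound (k t : ℕ) (hk : 0 < k) (hkt : k ≤ t)
    (b : ℕ → ℝ)
    (hmono : ∀ i j : ℕ, 1 ≤ i → i ≤ j → j ≤ t → b j ≤ b i)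
    (hpos : ∀ i : ℕ, 1 ≤ i → i ≤ t → 0 < b i)
    (α : ℝ) (hα : 0 < α)
    (hsum : α ≤ ∑ i ∈ Finset.Icc (t - k + 1) t, b i)
    (x : ℝ) (𝒜 : Finset (Finset (Fin t)))
    (h𝒜 : ∀ A ∈ 𝒜, x - α < 2 * ∑ i ∈ A, b ((i : ℕ) + 1) ∧
          2 * ∑ i ∈ A, b ((i : ℕ) + 1) < x + α) :
    𝒜.card ≤ sumKLargestBinom k t := by
  apply ksperner k t hkt
  intro A hA B hB hAB
  by_contra hcon
  push_neg at hcon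
  -- card B ≥ card A + k, so B \ A has at least k elements
  have hBA : k ≤ (B \ A).card := by
    rw [Finset.card_sdiff_of_subset hAB]
    omega
  set T : Finset ℕ := (B \ A).image (fun i : Fin t => (i : ℕ) + 1) with hT
  have hTcard : T.card = (B \ A).card := by
    rw [hT]
    apply Finset.card_image_of_injective
    intro a b hab
    exact Fin.ext (by simpa using hab)
  have hTsub : T ⊆ Finset.Icc 1 t := by
    intro i hi
    rw [hT, Finset.mem_image] at hi
    obtain ⟨j, _, rfl⟩ := hi
    rw [Finset.mem_Icc]
    exact ⟨by omega, by omega⟩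
  obtain ⟨T', hT'sub, hT'card⟩ := Finset.exists_subset_card_eq (hBA.trans hTcard.ge)
  have hsmall := sum_smallest b t hmono k t T' le_rfl (hT'sub.trans hTsub) hT'card
  have hT'T : ∑ i ∈ T', b i ≤ ∑ i ∈ T, b i := by
    rw [← Finset.sum_sdiff hT'sub]
    have : 0 ≤ ∑ i ∈ T \ T', b i := by
      apply Finset.sum_nonneg
      intro i hi
      have := hTsub (Finset.mem_sdiff.mp hi).1
      rw [Finset.mem_Icc] at this
      exact (hpos i this.1 this.2).le
    linarith
  have hTsum : ∑ i ∈ T, b i = ∑ i ∈ B \ A, b ((i : ℕ) + 1) := by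
    rw [hT]
    rw [Finset.sum_image (by intro a _ b _ hab; exact Fin.ext (by simpa using hab))]
  have hdiff : ∑ i ∈ B, b ((i : ℕ) + 1) - ∑ i ∈ A, b ((i : ℕ) + 1)
      = ∑ i ∈ B \ A, b ((i : ℕ) + 1) := by
    rw [← Finset.sum_sdiff hAB]
    ring
  have hge : α ≤ ∑ i ∈ B, b ((i : ℕ) + 1) - ∑ i ∈ A, b ((i : ℕ) + 1) := by
    rw [hdiff, ← hTsum]
    linarith
  obtain ⟨hA1, hA2⟩ := h𝒜 A hA
  obtain ⟨hB1, hB2⟩ := h𝒜 B hB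
  linarith

end Aux

/-- Erdős' anticoncentration bound: if `b 1 ≥ b 2 ≥ ... ≥ b t > 0` with
`b (t-k+1) + ... + b t ≥ α`, then for any `x` and further weights `b (t+1), ..., b n`
the Rademacher sum lands in `(x - α, x + α)` with probability at most
`sumKLargestBinom k t / 2 ^ t`. -/
theorem rademacher_anticoncentration (k t : ℕ) (hk : 0 < k) (hkt : k ≤ t)
    (b : ℕ → ℝ)
    (hmono : ∀ i j : ℕ, 1 ≤ i → i ≤ j → j ≤ t → b j ≤ b i)
    (hpos : ∀ i : ℕ, 1 ≤ i → i ≤ t → 0 < b i)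
    (α : ℝ) (hα : 0 < α)
    (hsum : α ≤ ∑ i ∈ Finset.Icc (t - k + 1) t, b i)
    (n : ℕ) (hn : t ≤ n) (x : ℝ) :
    radProb (fun i : Fin n => b ((i : ℕ) + 1)) (fun y => x - α < y ∧ y < x + α)
      ≤ (sumKLargestBinom k t : ℝ) / 2 ^ t := by
  classical
  obtain ⟨m, rfl⟩ : ∃ m, n = t + m := ⟨n - t, by omega⟩
  set g : Bool → ℝ := fun s => if s then (1:ℝ) else -1 with hg
  set S : (Fin (t + m) → Bool) → ℝ :=
    fun ε => ∑ i : Fin (t + m), b ((i : ℕ) + 1) * g (ε i) with hS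
  set P : (Fin (t + m) → Bool) → Prop := fun ε => x - α < S ε ∧ S ε < x + α with hP
  set E : Finset (Fin (t + m) → Bool) := Finset.univ.filter P with hE
  -- reduce to a cardinality bound
  have hcard : Nat.card {ε : Fin (t + m) → Bool |
      (fun y => x - α < y ∧ y < x + α)
        (∑ i, (fun i : Fin (t + m) => b ((i : ℕ) + 1)) i * (if ε i then (1:ℝ) else -1))} = E.card := by
    rw [Nat.card_eq_fintype_card]
    convert Fintype.card_subtype (p := P) using 2
    rfl
  -- key counting bound
  have hmain : E.card ≤ sumKLargestBinom k t * 2 ^ m := by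
    -- fiber over the tail
    have hfib : E.card = ∑ τ : Fin m → Bool,
        (E.filter (fun ε => (fun j : Fin m => ε (Fin.natAdd t j)) = τ)).card := by
      apply Finset.card_eq_sum_card_fiberwise
      intro ε _
      exact Finset.mem_univ _
    rw [hfib]
    have hbound : ∀ τ : Fin m → Bool,
        (E.filter (fun ε => (fun j : Fin m => ε (Fin.natAdd t j)) = τ)).card
          ≤ sumKLargestBinom k t := by
      intro τ
      set F := E.filter (fun ε => (fun j : Fin m => ε (Fin.natAdd t j)) = τ) with hF
      set ψ : (Fin (t + m) → Bool) → Finset (Fin t) :=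
        fun ε => Finset.univ.filter (fun i : Fin t => ε (Fin.castAdd m i) = true) with hψ
      -- the constant tail contribution
      set c : ℝ := ∑ j : Fin m, b (t + (j : ℕ) + 1) * g (τ j) with hc
      set Btot : ℝ := ∑ i : Fin t, b ((i : ℕ) + 1) with hBtot
      -- sum decomposition for members of the fiber
      have hdecomp : ∀ ε ∈ F, S ε = 2 * (∑ i ∈ ψ ε, b ((i : ℕ) + 1)) - Btot + c := by
        intro ε hε
        rw [hF, Finset.mem_filter] at hε
        obtain ⟨-, htail⟩ := hε
        have hsplit : S ε = (∑ i : Fin t, b ((i : ℕ) + 1) * g (ε (Fin.castAdd m i))) + c := by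
          simp only [hS]
          rw [Fin.sum_univ_add (f := fun i : Fin (t + m) => b ((i : ℕ) + 1) * g (ε i))]
          congr 1
          rw [hc]
          apply Finset.sum_congr rfl
          intro j _
          have hτ : ε (Fin.natAdd t j) = τ j := congrFun htail j
          rw [hτ]
          rfl
        rw [hsplit]
        have hhead : ∑ i : Fin t, b ((i : ℕ) + 1) * g (ε (Fin.castAdd m i))
            = 2 * (∑ i ∈ ψ ε, b ((i : ℕ) + 1)) - Btot := by
          rw [← Finset.sum_filter_add_sum_filter_not Finset.univ
            (fun i : Fin t => ε (Fin.castAdd m i) = true)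
            (fun i : Fin t => b ((i : ℕ) + 1) * g (ε (Fin.castAdd m i)))]
          have h1 : ∑ i ∈ Finset.univ.filter (fun i : Fin t => ε (Fin.castAdd m i) = true),
              b ((i : ℕ) + 1) * g (ε (Fin.castAdd m i)) = ∑ i ∈ ψ ε, b ((i : ℕ) + 1) := by
            apply Finset.sum_congr rfl
            intro i hi
            rw [Finset.mem_filter] at hi
            rw [hi.2, hg]
            simp
          have h2 : ∑ i ∈ Finset.univ.filter (fun i : Fin t => ¬ (ε (Fin.castAdd m i) = true)),
              b ((i : ℕ) + 1) * g (ε (Fin.castAdd m i))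
              = - ∑ i ∈ Finset.univ.filter (fun i : Fin t => ¬ (ε (Fin.castAdd m i) = true)),
                  b ((i : ℕ) + 1) := by
            rw [← Finset.sum_neg_distrib]
            apply Finset.sum_congr rfl
            intro i hi
            rw [Finset.mem_filter] at hi
            have : ε (Fin.castAdd m i) = false := by
              cases h : ε (Fin.castAdd m i)
              · rfl
              · exact absurd h hi.2
            rw [this, hg]
            simp
          rw [h1, h2]
          have h3 : ∑ i ∈ ψ ε, b ((i : ℕ) + 1)
              + ∑ i ∈ Finset.univ.filter (fun i : Fin t => ¬ (ε (Fin.castAdd m i) = true)),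
                  b ((i : ℕ) + 1) = Btot := by
            rw [hBtot, hψ]
            exact Finset.sum_filter_add_sum_filter_not _ _ _
          linarith
        rw [hhead]
      -- ψ is injective on the fiber
      have hinj : Set.InjOn ψ F := by
        intro ε hε ε' hε' hψeq
        rw [Finset.mem_coe, hF, Finset.mem_filter] at hε hε'
        funext i
        induction i using Fin.addCases with
        | left i =>
          have : (i ∈ ψ ε) ↔ (i ∈ ψ ε') := by rw [hψeq]
          rw [hψ] at this
          simp only [Finset.mem_filter, Finset.mem_univ, true_and] at this
          cases h : ε (Fin.castAdd m i) <;> cases h' : ε' (Fin.castAdd m i)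
          · rfl
          · rw [h, h'] at this; simp at this
          · rw [h, h'] at this; simp at this
          · rfl
        | right j =>
          rw [congrFun hε.2 j, congrFun hε'.2 j]
      have hcardF : F.card = (F.image ψ).card := (Finset.card_image_of_injOn hinj).symm
      rw [hcardF]
      -- apply the fiber bound to the image family
      apply fiber_bound k t hk hkt b hmono hpos α hα hsum (x - c + Btot)
      intro A hA
      rw [Finset.mem_image] at hA
      obtain ⟨ε, hε, rfl⟩ := hA
      have hd := hdecomp ε hε
      have hεE : ε ∈ E := Finset.mem_of_mem_filter ε hε
      rw [hE, Finset.mem_filter] at hεE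
      obtain ⟨-, hP1, hP2⟩ := hεE
      rw [hd] at hP1 hP2
      constructor <;> linarith
    calc ∑ τ : Fin m → Bool,
        (E.filter (fun ε => (fun j : Fin m => ε (Fin.natAdd t j)) = τ)).card
        ≤ ∑ _τ : Fin m → Bool, sumKLargestBinom k t :=
          Finset.sum_le_sum (fun τ _ => hbound τ)
      _ = sumKLargestBinom k t * 2 ^ m := by
          rw [Finset.sum_const, Finset.card_univ]
          simp [mul_comm]
  -- conclude
  rw [radProb]
  rw [hcard]
  have h2 : (0:ℝ) < 2 ^ (Fintype.card (Fin (t + m))) := by positivity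
  rw [div_le_div_iff₀ h2 (by positivity)]
  have hEle : (E.card : ℝ) ≤ (sumKLargestBinom k t : ℝ) * 2 ^ m := by
    exact_mod_cast hmain
  have hc2 : (2:ℝ) ^ (Fintype.card (Fin (t + m))) = 2 ^ t * 2 ^ m := by
    rw [Fintype.card_fin, pow_add]
  rw [hc2]
  nlinarith [pow_pos (show (0:ℝ) < 2 by norm_num) t, pow_pos (show (0:ℝ) < 2 by norm_num) m,
    hEle]
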